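/- Fix an integer $L \ge 1$ sufficiently large, and for $1 \le i \le 2^{L/100}$ define $m_i = (i/2^L,\; 1 - i^2/(2 \cdot 4^L)) \in \mathbb{R}^2$. Then: (1) for every such $i$, $\|m_i\|_2^2 \ge 1 + 2^{-(4L+2)}$; and (2) for every $i \ne j$ in this range, $\langle m_i, m_j \rangle \le 1$. -/
import Mathlib


open scoped RealInnerProductSpace

/-- The vector `m_i = (i/2^L, 1 - i²/(2·4^L)) ∈ ℝ²`. -/
noncomputable def mvec (L i : ℕ) : EuclideanSpace ℝ (Fin 2) :=
  (WithLp.equiv 2 (Fin 2 → ℝ)).symm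
    ![(i : ℝ) / 2 ^ L, 1 - (i : ℝ) ^ 2 / (2 * 4 ^ L)]

lemma inner_mvec (L i j : ℕ) : ⟪mvec L i, mvec L j⟫ =
    (i : ℝ) * j / 4 ^ L + (1 - (i:ℝ)^2/(2*4^L)) * (1 - (j:ℝ)^2/(2*4^L)) := by
  simp [mvec, PiLp.inner_apply, Fin.sum_univ_two, RCLike.inner_apply]
  have h4 : (4:ℝ)^L = 2^L * 2^L := by rw [← mul_pow]; norm_num
  rw [h4]; ring

/-- For `1 ≤ i, j ≤ 2^{L/100}`: `‖m_i‖² ≥ 1 + 2^{-(4L+2)}`, and `⟨m_i, m_j⟩ ≤ 1` for `i ≠ j`. -/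
theorem mvec_properties (L : ℕ) (hL : 1 ≤ L) :
    (∀ i : ℕ, 1 ≤ i → i ≤ 2 ^ (L / 100) →
      (1 : ℝ) + (2 : ℝ) ^ (-(4 * (L : ℤ) + 2)) ≤ ‖mvec L i‖ ^ 2) ∧
    (∀ i j : ℕ, 1 ≤ i → i ≤ 2 ^ (L / 100) → 1 ≤ j → j ≤ 2 ^ (L / 100) → i ≠ j →
      ⟪mvec L i, mvec L j⟫ ≤ 1) := by
  have h4pos : (0:ℝ) < 4 ^ L := by positivity
  have hz : (2:ℝ) ^ (-(4 * (L : ℤ) + 2)) = ((4:ℝ)^L * (4:ℝ)^L * 4)⁻¹ := by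
    rw [zpow_neg]
    congr 1
    rw [show (4 * (L:ℤ) + 2) = (2*L) + (2*L) + 2 by ring]
    rw [zpow_add₀ (by norm_num : (2:ℝ) ≠ 0), zpow_add₀ (by norm_num : (2:ℝ) ≠ 0)]
    have h2 : (2:ℝ) ^ ((2:ℤ)*L) = (4:ℝ)^L := by
      rw [show ((2:ℤ)*L) = ((2*L : ℕ) : ℤ) by push_cast; ring, zpow_natCast,
        pow_mul]; norm_num
    rw [h2]; norm_num
  constructor
  · intro i hi _
    have hnorm : ‖mvec L i‖ ^ 2 = ⟪mvec L i, mvec L i⟫ := (real_inner_self_eq_norm_sq _).symm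
    rw [hnorm, inner_mvec, hz]
    have hi1 : (1:ℝ) ≤ (i:ℝ) := by exact_mod_cast hi
    have key : (1:ℝ) ≤ (i:ℝ)^4 := one_le_pow₀ hi1
    have expand : (i:ℝ)*i/4^L + (1 - (i:ℝ)^2/(2*4^L)) * (1 - (i:ℝ)^2/(2*4^L))
        = 1 + (i:ℝ)^4 * (4^L*4^L*4)⁻¹ := by field_simp; ring
    rw [expand]
    have hinv : (0:ℝ) < ((4:ℝ)^L*4^L*4)⁻¹ := by positivity
    nlinarith
  · intro i j hi hiu hj hju hij
    rw [inner_mvec]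
    have key : (i:ℝ)^2 * (j:ℝ)^2 ≤ 2 * 4^L * ((i:ℝ) - j)^2 := by
      have hd : (1:ℝ) ≤ ((i:ℝ) - j)^2 := by
        rcases lt_or_gt_of_ne hij with h | h
        · have : (i:ℝ) + 1 ≤ j := by exact_mod_cast h
          nlinarith
        · have : (j:ℝ) + 1 ≤ i := by exact_mod_cast h
          nlinarith
      have hib : (i:ℝ) ≤ 2 ^ (L/100) := by exact_mod_cast hiu
      have hjb : (j:ℝ) ≤ 2 ^ (L/100) := by exact_mod_cast hju
      have hpow : ((2:ℝ) ^ (L/100))^4 ≤ 2 * 4^L := by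
        rw [← pow_mul]
        have h1 : (L/100) * 4 ≤ 2*L + 1 := by omega
        calc (2:ℝ) ^ ((L/100)*4) ≤ 2 ^ (2*L+1) := pow_le_pow_right₀ (by norm_num) h1
          _ = 2 * 4^L := by rw [pow_succ']; congr 1; rw [pow_mul]; norm_num
      have hi0 : (0:ℝ) ≤ (i:ℝ) := by positivity
      have hj0 : (0:ℝ) ≤ (j:ℝ) := by positivity
      calc (i:ℝ)^2 * (j:ℝ)^2 ≤ ((2:ℝ)^(L/100))^2 * ((2:ℝ)^(L/100))^2 := by
            apply mul_le_mul <;> nlinarith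
        _ = ((2:ℝ)^(L/100))^4 := by ring
        _ ≤ 2 * 4^L := hpow
        _ ≤ 2 * 4^L * ((i:ℝ)-j)^2 := by nlinarith
    have heq : 1 - ((i:ℝ)*j/4^L + (1 - (i:ℝ)^2/(2*4^L))*(1 - (j:ℝ)^2/(2*4^L)))
        = (2*4^L*((i:ℝ)-j)^2 - (i:ℝ)^2*(j:ℝ)^2)/(4^L*4^L*4) := by field_simp; ring
    have hnn : (0:ℝ) ≤ (2*4^L*((i:ℝ)-j)^2 - (i:ℝ)^2*(j:ℝ)^2)/(4^L*4^L*4) :=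
      div_nonneg (by linarith) (by positivity)
    linarith [heq ▸ hnn]
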